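/- Let f, g ∈ ℤ[X], let b, c be integers with b ≠ 0 satisfying the polynomial identity b·g = c·b − c·f, let h be the constant polynomial b, and let (a_n)_{n∈ℕ} = a(f,g,h). If for some n ≥ 1 one has a_n = c·b^n but a_{n−1} ≠ c·b^{n−1}, then f(n) = 0. -/

import Mathlib

open Polynomial

/-- The sequence a(f,g,h): a₀ = g(0), aₙ = f(n)·aₙ₋₁ + g(n)·h(n)ⁿ for n ≥ 1. -/
def seqA (f g h : Polynomial ℤ) : ℕ → ℤ
  | 0 => g.eval 0
  | n + 1 => f.eval ((n : ℤ) + 1) * seqA f g h n +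
      g.eval ((n : ℤ) + 1) * (h.eval ((n : ℤ) + 1)) ^ (n + 1)

theorem stmt_8 (f g : Polynomial ℤ) (b c : ℤ) (hb : b ≠ 0)
    (hpoly : Polynomial.C b * g = Polynomial.C (c * b) - Polynomial.C c * f) :
    ∀ n : ℕ, 1 ≤ n →
      seqA f g (Polynomial.C b) n = c * b ^ n →
      seqA f g (Polynomial.C b) (n - 1) ≠ c * b ^ (n - 1) →
      f.eval (n : ℤ) = 0 := by
  rintro n hn h1 h2
  obtain ⟨m, rfl⟩ : ∃ m, n = m + 1 := ⟨n - 1, (Nat.succ_pred_eq_of_pos hn).symm⟩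
  simp only [Nat.add_sub_cancel] at h2
  have hev := congrArg (Polynomial.eval ((m : ℤ) + 1)) hpoly
  simp only [Polynomial.eval_mul, Polynomial.eval_sub, Polynomial.eval_C] at hev
  -- hev : b * g.eval (m+1) = c * b - c * f.eval (m+1)
  have h1' : f.eval ((m : ℤ) + 1) * seqA f g (Polynomial.C b) m +
      g.eval ((m : ℤ) + 1) * b ^ (m + 1) = c * b ^ (m + 1) := by
    have := h1
    simp only [seqA, Polynomial.eval_C, Nat.cast_add, Nat.cast_one] at this ⊢
    linarith [this]
  have key : f.eval ((m : ℤ) + 1) * b * (seqA f g (Polynomial.C b) m - c * b ^ m) = 0 := by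
    have hmul := congrArg (· * b ^ (m + 1)) hev
    have hb1 := congrArg (· * b) h1'
    ring_nf at hmul hb1 ⊢
    nlinarith [hmul, hb1]
  push_cast
  rcases mul_eq_zero.mp key with h | h
  · rcases mul_eq_zero.mp h with h | h
    · exact h
    · exact absurd h hb
  · exact absurd (by linarith [sub_eq_zero.mp h]) h2
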